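/- Let n ≥ 1 and let X ∈ ℝ^{n×n}. Let τ, κ, δ, γ, C > 0. Let α* ∈ ℝ, and let L*, S* ∈ ℝ^{n×n} with L* symmetric positive semidefinite satisfying J L* = L* and ‖L*‖_∞ ≤ κ/n, S* symmetric, and |α*| ≤ Cκ. Set Θ* = α*𝟙𝟙ᵀ + L* + S* and P*_{ij} = exp(Θ*_{ij})/(1+exp(Θ*_{ij})). Let (α̂, L̂, Ŝ) minimize F(α,L,S) = h(α𝟙𝟙ᵀ+L+S) + δ‖L‖_* + γ‖S‖_1 over all α ∈ ℝ with |α| ≤ Cκ, S ∈ ℝ^{n×n} symmetric, and L ∈ ℝ^{n×n} symmetric positive semidefinite with J L = L and ‖L‖_∞ ≤ κ/n, and set Θ̂ = α̂𝟙𝟙ᵀ + L̂ + Ŝ. Assume the strong-convexity bound h(Θ̂) − h(Θ*) ≥ −(1/n)⟨X − P*, Θ̂ − Θ*⟩ + (τ/2)‖Θ̂ − Θ*‖_F², and assume δ ≥ 2‖(1/n)(X − P*)‖_op and γ ≥ 2‖(1/n)(X − P*)‖_∞ + 4κτ(Cn+1)/n. Then there exist universal constants c₁, c₂, c₃ > 0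 (independent of all of the above data) such that for every k ∈ {1,…,n}, every s ∈ {1,…,n²}, and every index set M ⊆ {1,…,n}×{1,…,n} with |M| ≤ s: ‖(α̂−α*)𝟙𝟙ᵀ‖_F² + ‖L̂−L*‖_F² + ‖Ŝ−S*‖_F² ≤ c₁ δ²/τ² + c₂ (δ²/τ²)·(k + (τ/δ)·Σ_{j=k+1}^{n} σ_j(L*)) + c₃ (γ²/τ²)·(s + (τ/γ)·Σ_{(i,j)∉M} |S*_{ij}|). -/

import Mathlib

open Matrix BigOperators Finset

noncomputable section

namespace CitNet

variable {n : ℕ}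

/-- Frobenius norm of a real matrix. -/
def frob (A : Matrix (Fin n) (Fin n) ℝ) : ℝ :=
  Real.sqrt (∑ i, ∑ j, (A i j) ^ 2)

/-- Elementwise ℓ1 norm. -/
def l1 (A : Matrix (Fin n) (Fin n) ℝ) : ℝ :=
  ∑ i, ∑ j, |A i j|

/-- Elementwise sup norm. -/
def supNorm (A : Matrix (Fin n) (Fin n) ℝ) : ℝ :=
  ⨆ i, ⨆ j, |A i j|

/-- Trace inner product. -/
def tinner (A B : Matrix (Fin n) (Fin n) ℝ) : ℝ :=
  Matrix.trace (Aᵀ * B)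

/-- Nuclear norm: trace of the PSD square root of AᴴA. -/
def nuclearNorm (A : Matrix (Fin n) (Fin n) ℝ) : ℝ :=
  ((Matrix.posSemidef_conjTranspose_mul_self A).1.eigenvectorUnitary.1 *
    Matrix.diagonal (fun i => Real.sqrt
      ((Matrix.posSemidef_conjTranspose_mul_self A).1.eigenvalues i)) *
    (star (Matrix.posSemidef_conjTranspose_mul_self A).1.eigenvectorUnitary.1)).trace

/-- Singular values in decreasing order: `svDesc A j` is σ_{j+1}(A). -/
def svDesc (A : Matrix (Fin n) (Fin n) ℝ) : Fin n → ℝ := fun j =>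
  Real.sqrt ((show (Aᵀ * A).IsHermitian by
      simpa using Matrix.isHermitian_conjTranspose_mul_self A).eigenvalues
    (Tuple.sort (show (Aᵀ * A).IsHermitian by
      simpa using Matrix.isHermitian_conjTranspose_mul_self A).eigenvalues j.rev))

/-- Operator norm: largest singular value. -/
def opNorm (A : Matrix (Fin n) (Fin n) ℝ) : ℝ :=
  ⨆ j, svDesc A j

/-- The all-ones matrix 𝟙𝟙ᵀ. -/
def onesMat : Matrix (Fin n) (Fin n) ℝ :=
  Matrix.of fun _ _ => (1 : ℝ)

/-- The centering matrix J = I − (1/n)𝟙𝟙ᵀ. -/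
def Jmat (n : ℕ) : Matrix (Fin n) (Fin n) ℝ :=
  1 - (n : ℝ)⁻¹ • onesMat

/-- Restriction of a matrix to an index set. -/
def restrict (A : Matrix (Fin n) (Fin n) ℝ) (Ω : Finset (Fin n × Fin n)) :
    Matrix (Fin n) (Fin n) ℝ :=
  Matrix.of fun i j => if (i, j) ∈ Ω then A i j else 0

/-- The logistic (sigmoid) matrix P(Θ). -/
def logis (Θ : Matrix (Fin n) (Fin n) ℝ) : Matrix (Fin n) (Fin n) ℝ :=
  Matrix.of fun i j => Real.exp (Θ i j) / (1 + Real.exp (Θ i j))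

/-- Negative log-likelihood function h. -/
def hfun (X Θ : Matrix (Fin n) (Fin n) ℝ) : ℝ :=
  -(1 / (n : ℝ)) * ∑ i, ∑ j, (X i j * Θ i j - Real.log (1 + Real.exp (Θ i j)))

lemma _root_.Matrix.isHermitian_transpose_mul_self (A : Matrix (Fin n) (Fin n) ℝ) :
    (Aᵀ * A).IsHermitian := by
  simpa using Matrix.isHermitian_conjTranspose_mul_self A

def _root_.Matrix.PosSemidef.sqrt {A : Matrix (Fin n) (Fin n) ℝ} (hA : A.PosSemidef) :
    Matrix (Fin n) (Fin n) ℝ :=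
  hA.1.eigenvectorUnitary.1 * Matrix.diagonal (fun i => Real.sqrt (hA.1.eigenvalues i)) *
    (star hA.1.eigenvectorUnitary.1)

open scoped MatrixOrder in
lemma _root_.Matrix.PosSemidef.sqrt_eq_cfc' {A : Matrix (Fin n) (Fin n) ℝ} (hA : A.PosSemidef) :
    hA.sqrt = CFC.sqrt A := by
  rw [CFC.sqrt_eq_cfc, cfc_nnreal_eq_real _ A, hA.1.cfc_eq]
  simp only [IsHermitian.cfc, Matrix.PosSemidef.sqrt]
  congr 3
  funext i
  simp [Real.coe_sqrt, Real.coe_toNNReal', max_eq_left (hA.eigenvalues_nonneg i)]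

open scoped MatrixOrder in
lemma _root_.Matrix.PosSemidef.posSemidef_sqrt {A : Matrix (Fin n) (Fin n) ℝ} (hA : A.PosSemidef) :
    hA.sqrt.PosSemidef := by
  rw [hA.sqrt_eq_cfc']; exact (CFC.sqrt_nonneg A).posSemidef

open scoped MatrixOrder in
lemma _root_.Matrix.PosSemidef.sqrt_mul_self {A : Matrix (Fin n) (Fin n) ℝ} (hA : A.PosSemidef) :
    hA.sqrt * hA.sqrt = A := by
  rw [hA.sqrt_eq_cfc']; exact CFC.sqrt_mul_sqrt_self A hA.nonneg

open scoped MatrixOrder in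
lemma _root_.Matrix.PosSemidef.eq_sqrt_of_sq_eq {A : Matrix (Fin n) (Fin n) ℝ} (hA : A.PosSemidef)
    {B : Matrix (Fin n) (Fin n) ℝ} (hB : B.PosSemidef) (hAB : A ^ 2 = B) : A = hB.sqrt := by
  rw [hB.sqrt_eq_cfc']
  exact (CFC.sqrt_unique (by rw [← sq]; exact hAB) hA.nonneg).symm

-- Auxiliary lemmas
-- basic lemmas
lemma frob_nonneg (A : Matrix (Fin n) (Fin n) ℝ) : 0 ≤ frob A := Real.sqrt_nonneg _

lemma sum_sq_nonneg (A : Matrix (Fin n) (Fin n) ℝ) : 0 ≤ ∑ i, ∑ j, (A i j)^2 := by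
  positivity

lemma frob_sq (A : Matrix (Fin n) (Fin n) ℝ) : frob A ^ 2 = ∑ i, ∑ j, (A i j)^2 :=
  Real.sq_sqrt (sum_sq_nonneg A)

lemma tinner_eq_sum (A B : Matrix (Fin n) (Fin n) ℝ) :
    tinner A B = ∑ i, ∑ j, A i j * B i j := by
  simp only [tinner, Matrix.trace, Matrix.diag, Matrix.mul_apply, Matrix.transpose_apply]
  exact Finset.sum_comm

lemma tinner_self (A : Matrix (Fin n) (Fin n) ℝ) : tinner A A = frob A ^ 2 := by
  rw [tinner_eq_sum, frob_sq]; congr 1; ext i; congr 1; ext j; ring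

lemma tinner_comm (A B : Matrix (Fin n) (Fin n) ℝ) : tinner A B = tinner B A := by
  rw [tinner_eq_sum, tinner_eq_sum]; congr 1; ext i; congr 1; ext j; ring

lemma frob_transpose (A : Matrix (Fin n) (Fin n) ℝ) : frob Aᵀ = frob A := by
  unfold frob
  rw [Finset.sum_comm]
  simp [Matrix.transpose_apply]

lemma abs_tinner_le (A B : Matrix (Fin n) (Fin n) ℝ) : |tinner A B| ≤ frob A * frob B := by
  have h := Finset.sum_mul_sq_le_sq_mul_sq Finset.univ
    (fun p : Fin n × Fin n => A p.1 p.2) (fun p : Fin n × Fin n => B p.1 p.2)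
  have hA : frob A = Real.sqrt (∑ p : Fin n × Fin n, (A p.1 p.2)^2) := by
    rw [frob, ← Fintype.sum_prod_type']
  have hB : frob B = Real.sqrt (∑ p : Fin n × Fin n, (B p.1 p.2)^2) := by
    rw [frob, ← Fintype.sum_prod_type']
  have hin : tinner A B = ∑ p : Fin n × Fin n, A p.1 p.2 * B p.1 p.2 := by
    rw [tinner_eq_sum, ← Fintype.sum_prod_type']
  rw [hin, hA, hB, ← Real.sqrt_mul (by positivity)]
  rw [← Real.sqrt_sq_eq_abs]
  exact Real.sqrt_le_sqrt h

lemma tinner_le (A B : Matrix (Fin n) (Fin n) ℝ) : tinner A B ≤ frob A * frob B :=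
  (le_abs_self _).trans (abs_tinner_le A B)

lemma tinner_add_right (A B C : Matrix (Fin n) (Fin n) ℝ) :
    tinner A (B + C) = tinner A B + tinner A C := by
  simp [tinner, Matrix.mul_add]

lemma tinner_sub_right (A B C : Matrix (Fin n) (Fin n) ℝ) :
    tinner A (B - C) = tinner A B - tinner A C := by
  simp [tinner, Matrix.mul_sub]

lemma tinner_smul_right (A B : Matrix (Fin n) (Fin n) ℝ) (r : ℝ) :
    tinner A (r • B) = r * tinner A B := by
  simp [tinner, Matrix.mul_smul]

lemma tinner_smul_left (A B : Matrix (Fin n) (Fin n) ℝ) (r : ℝ) :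
    tinner (r • A) B = r * tinner A B := by
  simp [tinner, Matrix.transpose_smul, Matrix.smul_mul]

lemma tinner_neg_left (A B : Matrix (Fin n) (Fin n) ℝ) : tinner (-A) B = - tinner A B := by
  simp [tinner, Matrix.transpose_neg, Matrix.neg_mul]

-- adjoint identities
lemma tinner_mul_left (W X Δ : Matrix (Fin n) (Fin n) ℝ) :
    tinner W (X * Δ) = tinner (Xᵀ * W) Δ := by
  simp only [tinner, Matrix.transpose_mul, Matrix.transpose_transpose]
  rw [← Matrix.mul_assoc]

lemma tinner_mul_right (W Δ Y : Matrix (Fin n) (Fin n) ℝ) :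
    tinner W (Δ * Y) = tinner (W * Yᵀ) Δ := by
  simp only [tinner, Matrix.transpose_mul, Matrix.transpose_transpose]
  rw [← Matrix.mul_assoc, Matrix.trace_mul_comm, ← Matrix.mul_assoc]

lemma tinner_conj (W X Y Δ : Matrix (Fin n) (Fin n) ℝ) :
    tinner W (X * Δ * Y) = tinner (Xᵀ * W * Yᵀ) Δ := by
  rw [tinner_mul_right, tinner_mul_left, Matrix.mul_assoc]

-- projection contraction
lemma frob_proj_mul_le (Q M : Matrix (Fin n) (Fin n) ℝ) (h : Qᵀ * Q = Q) :
    frob (Q * M) ≤ frob M := by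
  have h1 : tinner (Q * M) (Q * M) = tinner M (Q * M) := by
    rw [tinner_mul_left (Q*M) Q M, ← Matrix.mul_assoc, h, tinner_comm]
  have h2 : frob (Q*M)^2 ≤ frob M * frob (Q*M) := by
    rw [← tinner_self, h1]; exact tinner_le _ _
  nlinarith [frob_nonneg (Q*M), frob_nonneg M]


lemma conjT_eq_transpose (A : Matrix (Fin n) (Fin n) ℝ) : Aᴴ = Aᵀ := by
  ext i j; simp [Matrix.conjTranspose_apply]

lemma psd_transpose_eq {M : Matrix (Fin n) (Fin n) ℝ} (hM : M.PosSemidef) : Mᵀ = M := by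
  rw [← conjT_eq_transpose]; exact hM.1

lemma psd_diag_nonneg {M : Matrix (Fin n) (Fin n) ℝ} (hM : M.PosSemidef) (i : Fin n) :
    0 ≤ M i i := by
  have := hM.dotProduct_mulVec_nonneg (Pi.single i 1)
  simpa using this

lemma psd_trace_nonneg {M : Matrix (Fin n) (Fin n) ℝ} (hM : M.PosSemidef) : 0 ≤ M.trace := by
  exact Finset.sum_nonneg fun i _ => psd_diag_nonneg hM i

def UDU (V : Matrix (Fin n) (Fin n) ℝ) (g : Fin n → ℝ) : Matrix (Fin n) (Fin n) ℝ :=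
  V * Matrix.diagonal g * Vᵀ

lemma UDU_transpose (V : Matrix (Fin n) (Fin n) ℝ) (g : Fin n → ℝ) :
    (UDU V g)ᵀ = UDU V g := by
  simp [UDU, Matrix.transpose_mul, Matrix.diagonal_transpose, Matrix.mul_assoc]

lemma UDU_mul (V : Matrix (Fin n) (Fin n) ℝ) (hV : Vᵀ * V = 1) (g h : Fin n → ℝ) :
    UDU V g * UDU V h = UDU V (fun j => g j * h j) := by
  have : V * Matrix.diagonal g * Vᵀ * (V * Matrix.diagonal h * Vᵀ)
      = V * (Matrix.diagonal g * ((Vᵀ * V) * Matrix.diagonal h)) * Vᵀ := by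
    simp only [Matrix.mul_assoc]
  rw [UDU, UDU, this, hV, Matrix.one_mul, Matrix.diagonal_mul_diagonal]
  rfl

lemma trace_UDU (V : Matrix (Fin n) (Fin n) ℝ) (hV : Vᵀ * V = 1) (g : Fin n → ℝ) :
    (UDU V g).trace = ∑ j, g j := by
  rw [UDU, Matrix.trace_mul_comm, ← Matrix.mul_assoc, hV, Matrix.one_mul,
    Matrix.trace_diagonal]

lemma UDU_psd (V : Matrix (Fin n) (Fin n) ℝ) (g : Fin n → ℝ) (hg : ∀ j, 0 ≤ g j) :
    (UDU V g).PosSemidef := by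
  have hd : (Matrix.diagonal g).PosSemidef := Matrix.posSemidef_diagonal_iff.mpr hg
  have := hd.mul_mul_conjTranspose_same V
  rwa [conjT_eq_transpose] at this

lemma psd_decomp {L : Matrix (Fin n) (Fin n) ℝ} (hL : L.PosSemidef) :
    ∃ V : Matrix (Fin n) (Fin n) ℝ, Vᵀ * V = 1 ∧ V * Vᵀ = 1 ∧
      L = UDU V (fun j => Real.sqrt ((Matrix.isHermitian_transpose_mul_self L).eigenvalues j)) := by
  set P := Matrix.posSemidef_conjTranspose_mul_self L with hP
  have hsq : L = P.sqrt := by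
    refine hL.eq_sqrt_of_sq_eq P ?_
    rw [pow_two]
    nth_rewrite 1 [← hL.1]
    rfl
  have h1 : (P.1.eigenvectorUnitary.1)ᵀ * P.1.eigenvectorUnitary.1 = 1 := by
    rw [← conjT_eq_transpose, ← Matrix.star_eq_conjTranspose]
    exact Matrix.mem_unitaryGroup_iff'.mp P.1.eigenvectorUnitary.2
  refine ⟨P.1.eigenvectorUnitary.1, h1, mul_eq_one_comm.mp h1, ?_⟩
  conv_lhs => rw [hsq]
  rw [Matrix.PosSemidef.sqrt, UDU]
  congr 1


lemma le_of_sq_le_mul {x c : ℝ} (hx : 0 ≤ x) (h : x^2 ≤ c * x) : x ≤ c ∨ x = 0 := by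
  rcases eq_or_lt_of_le hx with h0 | h0
  · exact Or.inr h0.symm
  · left; exact le_of_mul_le_mul_right (by nlinarith) h0

lemma herm_decomp {A : Matrix (Fin n) (Fin n) ℝ} (hA : A.IsHermitian) :
    ∃ V : Matrix (Fin n) (Fin n) ℝ, Vᵀ * V = 1 ∧ V * Vᵀ = 1 ∧ A = UDU V hA.eigenvalues := by
  have h1 : ((hA.eigenvectorUnitary.1 : Matrix (Fin n) (Fin n) ℝ))ᵀ * hA.eigenvectorUnitary.1 = 1 := by
    rw [← conjT_eq_transpose, ← Matrix.star_eq_conjTranspose]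
    exact Matrix.mem_unitaryGroup_iff'.mp hA.eigenvectorUnitary.2
  refine ⟨hA.eigenvectorUnitary.1, h1, mul_eq_one_comm.mp h1, ?_⟩
  conv_lhs => rw [hA.spectral_theorem]
  rw [UDU]
  congr 1

lemma svDesc_nonneg (A : Matrix (Fin n) (Fin n) ℝ) (j : Fin n) : 0 ≤ svDesc A j :=
  Real.sqrt_nonneg _

lemma svDesc_le_opNorm (A : Matrix (Fin n) (Fin n) ℝ) (j : Fin n) : svDesc A j ≤ opNorm A :=
  le_ciSup (Set.Finite.bddAbove (Set.finite_range _)) j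

lemma opNorm_nonneg (hn : 0 < n) (A : Matrix (Fin n) (Fin n) ℝ) : 0 ≤ opNorm A :=
  le_trans (svDesc_nonneg A ⟨0, hn⟩) (svDesc_le_opNorm A ⟨0, hn⟩)

lemma sqrt_eig_le_opNorm (A : Matrix (Fin n) (Fin n) ℝ) (j : Fin n) :
    Real.sqrt ((Matrix.isHermitian_transpose_mul_self A).eigenvalues j) ≤ opNorm A := by
  have h : svDesc A (Fin.rev ((Tuple.sort (Matrix.isHermitian_transpose_mul_self A).eigenvalues).symm j))
      = Real.sqrt ((Matrix.isHermitian_transpose_mul_self A).eigenvalues j) := by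
    unfold svDesc
    congr 2
    rw [Fin.rev_rev]
    exact Equiv.apply_symm_apply _ j
  rw [← h]; exact svDesc_le_opNorm _ _

lemma eig_nonneg (A : Matrix (Fin n) (Fin n) ℝ) (j : Fin n) :
    0 ≤ (Matrix.isHermitian_transpose_mul_self A).eigenvalues j :=
  (Matrix.posSemidef_conjTranspose_mul_self A).eigenvalues_nonneg j

lemma eig_le_sq_opNorm (A : Matrix (Fin n) (Fin n) ℝ) (j : Fin n) :
    (Matrix.isHermitian_transpose_mul_self A).eigenvalues j ≤ opNorm A ^ 2 := by
  nlinarith [sqrt_eig_le_opNorm A j, Real.sq_sqrt (eig_nonneg A j),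
    Real.sqrt_nonneg ((Matrix.isHermitian_transpose_mul_self A).eigenvalues j)]

lemma frob_mul_le (hn : 0 < n) (A M : Matrix (Fin n) (Fin n) ℝ) :
    frob (A * M) ≤ opNorm A * frob M := by
  obtain ⟨V, hV1, hV2, hdec⟩ := herm_decomp (Matrix.isHermitian_transpose_mul_self A)
  set e := (Matrix.isHermitian_transpose_mul_self A).eigenvalues with he
  set N := Vᵀ * M with hN
  have hAA : Aᵀ * A = UDU V e := by
    rw [← hdec]
  have key : frob (A*M)^2 = ∑ j, e j * ∑ i, (N j i)^2 := by
    rw [← tinner_self, tinner_mul_left, ← Matrix.mul_assoc, hAA]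
    have : UDU V e * M = V * (Matrix.diagonal e * N) := by
      rw [UDU, hN, Matrix.mul_assoc, Matrix.mul_assoc]
    rw [this, tinner_comm, tinner_mul_left, ← hN, tinner_eq_sum]
    congr 1; funext j
    rw [Finset.mul_sum]
    congr 1; funext i
    rw [Matrix.diagonal_mul]
    ring
  have hNM : ∑ j, ∑ i, (N j i)^2 = frob M ^ 2 := by
    have h2 : tinner N N = tinner M M := by
      rw [hN, tinner_mul_left, Matrix.transpose_transpose, ← Matrix.mul_assoc, hV2,
        Matrix.one_mul]
    have h3 := tinner_self N
    rw [tinner_self M] at h2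
    rw [← h2, tinner_eq_sum] at *
    rw [← h2]
    congr 1; funext j; congr 1; funext i; ring
  have hb : frob (A*M)^2 ≤ opNorm A ^2 * frob M ^2 := by
    rw [key, ← hNM, Finset.mul_sum]
    apply Finset.sum_le_sum
    intro j _
    have : (0:ℝ) ≤ ∑ i, (N j i)^2 := by positivity
    exact mul_le_mul_of_nonneg_right (eig_le_sq_opNorm A j) this
  nlinarith [frob_nonneg (A*M), opNorm_nonneg hn A, frob_nonneg M,
    mul_nonneg (opNorm_nonneg hn A) (frob_nonneg M)]

lemma frob_transpose_mul_le (hn : 0 < n) (A M : Matrix (Fin n) (Fin n) ℝ) :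
    frob (Aᵀ * M) ≤ opNorm A * frob M := by
  have h : frob (Aᵀ*M)^2 = tinner M (A * (Aᵀ * M)) := by
    rw [← tinner_self, ← tinner_mul_left, tinner_comm]
  have h2 : frob (Aᵀ*M)^2 ≤ frob M * (opNorm A * frob (Aᵀ*M)) := by
    rw [h]
    exact (tinner_le _ _).trans
      (mul_le_mul_of_nonneg_left (frob_mul_le hn A _) (frob_nonneg M))
  rcases le_of_sq_le_mul (c := opNorm A * frob M) (frob_nonneg (Aᵀ*M)) (by nlinarith [h2]) with h3 | h3
  · exact h3
  · rw [h3]; exact mul_nonneg (opNorm_nonneg hn A) (frob_nonneg M)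

lemma frob_mul_transpose_le (hn : 0 < n) (M A : Matrix (Fin n) (Fin n) ℝ) :
    frob (M * A) ≤ opNorm A * frob M := by
  have : frob (M * A) = frob (Aᵀ * Mᵀ) := by
    rw [← frob_transpose (M*A), Matrix.transpose_mul]
  rw [this, ← frob_transpose M]
  exact frob_transpose_mul_le hn A Mᵀ

lemma abs_tinner_psd_le (hn : 0 < n) (A S : Matrix (Fin n) (Fin n) ℝ) (hS : S.PosSemidef) :
    |tinner A S| ≤ opNorm A * S.trace := by
  set B := hS.sqrt with hBdef
  have hB : B.PosSemidef := hS.posSemidef_sqrt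
  have hBt : Bᵀ = B := psd_transpose_eq hB
  have hBB : B * B = S := hS.sqrt_mul_self
  have h1 : tinner A S = tinner (B * A) B := by
    rw [← hBB, tinner_mul_left (W := A) (X := B) (Δ := B), hBt]
  have h2 : frob (B * A) ≤ opNorm A * frob B := by
    have : frob (B * A) = frob (Aᵀ * B) := by
      rw [← frob_transpose (B*A), Matrix.transpose_mul, hBt]
    rw [this]
    exact frob_transpose_mul_le hn A B
  have h3 : frob B ^ 2 = S.trace := by
    rw [← tinner_self, tinner, hBt, hBB]
  calc |tinner A S| = |tinner (B*A) B| := by rw [h1]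
    _ ≤ frob (B*A) * frob B := abs_tinner_le _ _
    _ ≤ (opNorm A * frob B) * frob B := mul_le_mul_of_nonneg_right h2 (frob_nonneg B)
    _ = opNorm A * S.trace := by rw [← h3]; ring

lemma tinner_psd_psd_nonneg (P Q : Matrix (Fin n) (Fin n) ℝ)
    (hP : P.PosSemidef) (hQ : Q.PosSemidef) : 0 ≤ tinner P Q := by
  set B := hP.sqrt with hBdef
  have hB : B.PosSemidef := hP.posSemidef_sqrt
  have hBt : Bᵀ = B := psd_transpose_eq hB
  have hBB : B * B = P := hP.sqrt_mul_self
  have h1 : tinner P Q = (B * Q * Bᴴ).trace := by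
    rw [tinner, psd_transpose_eq hP, ← hBB, conjT_eq_transpose, hBt]
    rw [Matrix.mul_assoc, Matrix.trace_mul_comm, Matrix.mul_assoc]
  rw [h1]
  exact psd_trace_nonneg (hQ.mul_mul_conjTranspose_same B)


lemma nuclear_psd_eq_trace {L : Matrix (Fin n) (Fin n) ℝ} (hL : L.PosSemidef) :
    nuclearNorm L = L.trace := by
  obtain ⟨V, hV1, _hV2, hdec⟩ := psd_decomp hL
  have h1 : L = (Matrix.posSemidef_conjTranspose_mul_self L).sqrt := by
    refine hL.eq_sqrt_of_sq_eq _ ?_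
    rw [pow_two]; nth_rewrite 1 [← hL.1]; rfl
  show (Matrix.posSemidef_conjTranspose_mul_self L).sqrt.trace = _
  rw [← h1]

def dfun (A : Matrix (Fin n) (Fin n) ℝ) (k : ℕ) : Fin n → ℝ := fun j =>
  if k ≤ (((Tuple.sort (Matrix.isHermitian_transpose_mul_self A).eigenvalues).symm j).rev : ℕ)
  then 0 else 1

lemma dfun_nonneg (A : Matrix (Fin n) (Fin n) ℝ) (k : ℕ) (j : Fin n) : 0 ≤ dfun A k j := by
  unfold dfun; split <;> norm_num

lemma one_sub_dfun_nonneg (A : Matrix (Fin n) (Fin n) ℝ) (k : ℕ) (j : Fin n) :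
    0 ≤ 1 - dfun A k j := by
  unfold dfun; split <;> norm_num

lemma dfun_mul_self (A : Matrix (Fin n) (Fin n) ℝ) (k : ℕ) (j : Fin n) :
    dfun A k j * dfun A k j = dfun A k j := by
  unfold dfun; split <;> norm_num

lemma one_sub_dfun_mul_self (A : Matrix (Fin n) (Fin n) ℝ) (k : ℕ) (j : Fin n) :
    (1 - dfun A k j) * (1 - dfun A k j) = 1 - dfun A k j := by
  unfold dfun; split <;> norm_num

lemma sum_comp_rev_sort (A : Matrix (Fin n) (Fin n) ℝ) (f : Fin n → ℝ) :
    ∑ j, f j = ∑ i, f ((Tuple.sort (Matrix.isHermitian_transpose_mul_self A).eigenvalues)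
      (Fin.rev i)) := by
  exact (Equiv.sum_comp (Fin.revPerm.trans
    (Tuple.sort (Matrix.isHermitian_transpose_mul_self A).eigenvalues)) f).symm

lemma dfun_sorted (A : Matrix (Fin n) (Fin n) ℝ) (k : ℕ) (i : Fin n) :
    dfun A k ((Tuple.sort (Matrix.isHermitian_transpose_mul_self A).eigenvalues) (Fin.rev i))
      = if k ≤ (i : ℕ) then 0 else 1 := by
  unfold dfun
  rw [Equiv.symm_apply_apply, Fin.rev_rev]

lemma sum_dfun (A : Matrix (Fin n) (Fin n) ℝ) (k : ℕ) (hk : k ≤ n) :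
    ∑ j, dfun A k j = k := by
  rw [sum_comp_rev_sort A (dfun A k)]
  simp only [dfun_sorted]
  have h1 : ∀ i : Fin n, (if k ≤ (i:ℕ) then (0:ℝ) else 1) = if (i:ℕ) < k then 1 else 0 := by
    intro i
    by_cases h : k ≤ (i:ℕ)
    · simp [h, Nat.not_lt.mpr h]
    · simp [h, Nat.not_le.mp h]
  rw [Finset.sum_congr rfl (fun i _ => h1 i), Fin.sum_univ_eq_sum_range (fun i => if i < k then (1:ℝ) else 0) n]
  rw [← Finset.sum_filter]
  have h2 : (Finset.range n).filter (fun i => i < k) = Finset.range k := by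
    ext a; simp only [Finset.mem_filter, Finset.mem_range]; omega
  rw [h2, Finset.sum_const, Finset.card_range]
  simp

lemma sum_one_sub_dfun_mul (A : Matrix (Fin n) (Fin n) ℝ) (k : ℕ) :
    ∑ j, (1 - dfun A k j) *
        Real.sqrt ((Matrix.isHermitian_transpose_mul_self A).eigenvalues j)
      = ∑ j ∈ Finset.univ.filter (fun j : Fin n => k ≤ (j : ℕ)), svDesc A j := by
  rw [sum_comp_rev_sort A (fun j => (1 - dfun A k j) * Real.sqrt (_))]
  simp only [dfun_sorted]
  rw [Finset.sum_filter]
  congr 1; funext i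
  have : svDesc A i = Real.sqrt ((Matrix.isHermitian_transpose_mul_self A).eigenvalues
      ((Tuple.sort (Matrix.isHermitian_transpose_mul_self A).eigenvalues) (Fin.rev i))) := rfl
  rw [← this]
  split_ifs <;> ring


lemma entry_le_supNorm (A : Matrix (Fin n) (Fin n) ℝ) (i j : Fin n) :
    |A i j| ≤ supNorm A := by
  have h1 : |A i j| ≤ ⨆ j', |A i j'| :=
    le_ciSup (f := fun j' => |A i j'|) (Set.Finite.bddAbove (Set.finite_range _)) j
  exact h1.trans (le_ciSup (Set.Finite.bddAbove (Set.finite_range _)) i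
    (f := fun i' => ⨆ j', |A i' j'|))

lemma onesMat_posSemidef : (onesMat : Matrix (Fin n) (Fin n) ℝ).PosSemidef := by
  refine Matrix.posSemidef_iff_dotProduct_mulVec.mpr ⟨?_, ?_⟩
  · ext i j; simp [onesMat, Matrix.conjTranspose_apply]
  · intro x
    have : (dotProduct (star x) (onesMat *ᵥ x)) = (∑ i, x i) * (∑ j, x j) := by
      simp only [dotProduct, Matrix.mulVec, onesMat, Matrix.of_apply, star_trivial,
        one_mul]
      rw [Finset.sum_mul]
    rw [this]
    exact mul_self_nonneg _
  
lemma onesMat_trace : (onesMat : Matrix (Fin n) (Fin n) ℝ).trace = n := by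
  simp [Matrix.trace, Matrix.diag, onesMat]

lemma tinner_ones (L : Matrix (Fin n) (Fin n) ℝ) :
    tinner onesMat L = ∑ i, ∑ j, L i j := by
  rw [tinner_eq_sum]; simp [onesMat]

lemma sum_eq_zero_of_J (hn : 0 < n) (L : Matrix (Fin n) (Fin n) ℝ)
    (hJ : Jmat n * L = L) : ∑ i, ∑ j, L i j = 0 := by
  have h1 : (onesMat : Matrix (Fin n) (Fin n) ℝ) * L = 0 := by
    have h2 : (1 - (n : ℝ)⁻¹ • onesMat) * L = L := hJ
    rw [Matrix.sub_mul, Matrix.one_mul, Matrix.smul_mul, sub_eq_self] at h2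
    have hne : ((n:ℝ))⁻¹ ≠ 0 := inv_ne_zero (Nat.cast_ne_zero.mpr (by omega))
    exact (smul_eq_zero.mp h2).resolve_left hne
  have h3 : ∀ j, ∑ i, L i j = 0 := by
    intro j
    have := congrFun (congrFun h1 ⟨0, hn⟩) j
    simpa [Matrix.mul_apply, onesMat] using this
  rw [show (∑ i, ∑ j, L i j) = ∑ j, ∑ i, L i j from Finset.sum_comm]
  simp [h3]

lemma frob_smul_ones_sq (a : ℝ) :
    frob (a • (onesMat : Matrix (Fin n) (Fin n) ℝ)) ^ 2 = (|a| * n)^2 := by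
  rw [frob_sq]
  simp [onesMat, mul_pow, sq_abs]
  ring

lemma tinner_add_left (A B C : Matrix (Fin n) (Fin n) ℝ) :
    tinner (A + B) C = tinner A C + tinner B C := by
  rw [tinner_comm, tinner_add_right, tinner_comm C A, tinner_comm C B]

lemma frob_add_sq (A B : Matrix (Fin n) (Fin n) ℝ) :
    frob (A + B) ^ 2 = frob A ^ 2 + 2 * tinner A B + frob B ^ 2 := by
  rw [← tinner_self, ← tinner_self, ← tinner_self, tinner_add_right, tinner_add_left,
    tinner_add_left, tinner_comm B A]
  ring

lemma l1_eq_prod_sum (A : Matrix (Fin n) (Fin n) ℝ) :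
    l1 A = ∑ p : Fin n × Fin n, |A p.1 p.2| := by
  rw [l1, ← Fintype.sum_prod_type']

lemma sum_abs_le_sqrt_card_mul_frob (A : Matrix (Fin n) (Fin n) ℝ)
    (M : Finset (Fin n × Fin n)) (s : ℕ) (hM : M.card ≤ s) :
    ∑ p ∈ M, |A p.1 p.2| ≤ Real.sqrt s * frob A := by
  have h1 := Finset.sum_mul_sq_le_sq_mul_sq M (fun _ => (1:ℝ)) (fun p => |A p.1 p.2|)
  simp only [one_mul, one_pow, Finset.sum_const, nsmul_eq_mul, mul_one] at h1
  have h2 : ∑ p ∈ M, |A p.1 p.2| ^ 2 ≤ frob A ^ 2 := by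
    rw [frob_sq, ← Fintype.sum_prod_type']
    simp_rw [sq_abs]
    refine Finset.sum_le_sum_of_subset_of_nonneg (Finset.subset_univ M) ?_
    intro p _ _; positivity
  have h3 : (∑ p ∈ M, |A p.1 p.2|) ^ 2 ≤ s * frob A ^ 2 := by
    calc (∑ p ∈ M, |A p.1 p.2|) ^ 2 ≤ (M.card : ℝ) * ∑ p ∈ M, |A p.1 p.2| ^ 2 := by
          simpa [sq_abs] using h1
      _ ≤ s * frob A ^ 2 := by
          apply mul_le_mul (by exact_mod_cast hM) h2 (by positivity) (by positivity)
  have h4 : 0 ≤ ∑ p ∈ M, |A p.1 p.2| := Finset.sum_nonneg fun p _ => abs_nonneg _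
  calc ∑ p ∈ M, |A p.1 p.2| = Real.sqrt ((∑ p ∈ M, |A p.1 p.2|)^2) := (Real.sqrt_sq h4).symm
    _ ≤ Real.sqrt (s * frob A ^2) := Real.sqrt_le_sqrt h3
    _ = Real.sqrt s * frob A := by
        rw [Real.sqrt_mul (by positivity), Real.sqrt_sq (frob_nonneg A)]


lemma UDU_add (V : Matrix (Fin n) (Fin n) ℝ) (g h : Fin n → ℝ) :
    UDU V g + UDU V h = UDU V (fun j => g j + h j) := by
  unfold UDU
  rw [← Matrix.add_mul, ← Matrix.mul_add, ← Matrix.diagonal_add]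

lemma UDU_one (V : Matrix (Fin n) (Fin n) ℝ) (hV2 : V * Vᵀ = 1) :
    UDU V (fun _ => 1) = 1 := by
  unfold UDU
  rw [show (Matrix.diagonal (fun _ : Fin n => (1:ℝ))) = 1 from Matrix.diagonal_one,
    Matrix.mul_one, hV2]

lemma amgm (t x c : ℝ) : t*(c*x) ≤ t^2*x^2/4 + c^2 := by
  nlinarith [sq_nonneg (t*x - 2*c)]

lemma tinner_one_left (A : Matrix (Fin n) (Fin n) ℝ) : tinner 1 A = A.trace := by
  rw [tinner, Matrix.transpose_one, Matrix.one_mul]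


set_option maxHeartbeats 2000000 in
/-- main non-asymptotic error bound, Theorem 1: there are universal constants
`c₁, c₂, c₃ > 0` such that for any data satisfying the model assumptions, the minimizer of the
penalized likelihood obeys the stated squared-Frobenius error bound. -/
theorem stmt0 :
    ∃ c₁ c₂ c₃ : ℝ, 0 < c₁ ∧ 0 < c₂ ∧ 0 < c₃ ∧
      ∀ (n : ℕ) (X : Matrix (Fin n) (Fin n) ℝ) (τ κ δ γ C αs αh : ℝ)
        (Ls Ss Lh Sh : Matrix (Fin n) (Fin n) ℝ),
        1 ≤ n → 0 < τ → 0 < κ → 0 < δ → 0 < γ → 0 < C →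
        -- ground truth assumptions
        Ls.PosSemidef → Jmat n * Ls = Ls → supNorm Ls ≤ κ / n →
        Ss.IsSymm → |αs| ≤ C * κ →
        -- (α̂, L̂, Ŝ) is feasible
        |αh| ≤ C * κ → Sh.IsSymm → Lh.PosSemidef → Jmat n * Lh = Lh → supNorm Lh ≤ κ / n →
        -- (α̂, L̂, Ŝ) minimizes the penalized objective over the feasible set
        (∀ (α : ℝ) (L S : Matrix (Fin n) (Fin n) ℝ),
          |α| ≤ C * κ → S.IsSymm → L.PosSemidef → Jmat n * L = L → supNorm L ≤ κ / n →
          hfun X (αh • onesMat + Lh + Sh) + δ * nuclearNorm Lh + γ * l1 Sh ≤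
            hfun X (α • onesMat + L + S) + δ * nuclearNorm L + γ * l1 S) →
        -- strong convexity bound at the pair (Θ̂, Θ*)
        (hfun X (αh • onesMat + Lh + Sh) - hfun X (αs • onesMat + Ls + Ss) ≥
            -(1 / (n : ℝ)) * tinner (X - logis (αs • onesMat + Ls + Ss))
                ((αh • onesMat + Lh + Sh) - (αs • onesMat + Ls + Ss))
              + (τ / 2) * (frob ((αh • onesMat + Lh + Sh) - (αs • onesMat + Ls + Ss))) ^ 2) →
        -- conditions on the regularization parameters
        δ ≥ 2 * opNorm ((1 / (n : ℝ)) • (X - logis (αs • onesMat + Ls + Ss))) →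
        γ ≥ 2 * supNorm ((1 / (n : ℝ)) • (X - logis (αs • onesMat + Ls + Ss)))
            + 4 * κ * τ * (C * n + 1) / n →
        -- conclusion, for every k ∈ {1,…,n}, s ∈ {1,…,n²}, |M| ≤ s
        ∀ (k s : ℕ) (M : Finset (Fin n × Fin n)),
          1 ≤ k → k ≤ n → 1 ≤ s → s ≤ n ^ 2 → M.card ≤ s →
          (frob ((αh - αs) • (onesMat : Matrix (Fin n) (Fin n) ℝ))) ^ 2
              + (frob (Lh - Ls)) ^ 2 + (frob (Sh - Ss)) ^ 2
            ≤ c₁ * δ ^ 2 / τ ^ 2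
              + c₂ * (δ ^ 2 / τ ^ 2) *
                  (k + (τ / δ) *
                    ∑ j ∈ Finset.univ.filter (fun j : Fin n => k ≤ (j : ℕ)), svDesc Ls j)
              + c₃ * (γ ^ 2 / τ ^ 2) *
                  (s + (τ / γ) * ∑ p ∈ Finset.univ \ M, |Ss p.1 p.2|) := by
  refine ⟨2, 22, 12, by norm_num, by norm_num, by norm_num, ?_⟩
  intro n X τ κ δ γ C αs αh Ls Ss Lh Sh hn hτ hκ hδ0 hγ0 hC hLs hJs hsupLs hSs hαs hαh
    hShs hLh hJh hsupLh hmin hsc hδ hγ k s M hk1 hkn hs1 _hsn hM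
  have hn0 : 0 < n := hn
  have hnR : (0:ℝ) < n := by exact_mod_cast hn0
  set Θh := αh • (onesMat : Matrix (Fin n) (Fin n) ℝ) + Lh + Sh with hΘh
  set Θs := αs • (onesMat : Matrix (Fin n) (Fin n) ℝ) + Ls + Ss with hΘs
  set W : Matrix (Fin n) (Fin n) ℝ := (1 / (n : ℝ)) • (X - logis Θs) with hW
  set a := αh - αs with ha
  set DL := Lh - Ls with hDL
  set DS := Sh - Ss with hDS
  set Δ : Matrix (Fin n) (Fin n) ℝ := Θh - Θs with hΔd
  have hΔeq : Δ = a • (onesMat : Matrix (Fin n) (Fin n) ℝ) + DL + DS := by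
    rw [hΔd, hΘh, hΘs, ha, hDL, hDS, sub_smul]
    abel
  set o := opNorm W with ho_def
  set w := supNorm W with hw_def
  set y := frob DL with hy
  set z := frob DS with hz
  set rk := Real.sqrt k with hrk_def
  set rs := Real.sqrt s with hrs_def
  set m1 := ∑ p ∈ M, |DS p.1 p.2| with hm1_def
  set m2 := ∑ p ∈ Finset.univ \ M, |DS p.1 p.2| with hm2_def
  set R := ∑ p ∈ Finset.univ \ M, |Ss p.1 p.2| with hR_def
  set Tk := ∑ j ∈ Finset.univ.filter (fun j : Fin n => k ≤ (j : ℕ)), svDesc Ls j with hTk_def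
  set q : ℝ := 2*(C*κ) + 2*(κ/n) with hq_def
  clear_value o w y z rk rs m1 m2 R Tk q
  have hy0 : 0 ≤ y := by rw [hy]; exact frob_nonneg _
  have hz0 : 0 ≤ z := by rw [hz]; exact frob_nonneg _
  have hrk0 : 0 ≤ rk := by rw [hrk_def]; exact Real.sqrt_nonneg _
  have hrs0 : 0 ≤ rs := by rw [hrs_def]; exact Real.sqrt_nonneg _
  have hrk2 : rk^2 = (k:ℝ) := by rw [hrk_def]; exact Real.sq_sqrt (by positivity)
  have hrs2 : rs^2 = (s:ℝ) := by rw [hrs_def]; exact Real.sq_sqrt (by positivity)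
  have hm10 : 0 ≤ m1 := by
    rw [hm1_def]; exact Finset.sum_nonneg fun p _ => abs_nonneg _
  have hm20 : 0 ≤ m2 := by
    rw [hm2_def]; exact Finset.sum_nonneg fun p _ => abs_nonneg _
  have hR0 : 0 ≤ R := by
    rw [hR_def]; exact Finset.sum_nonneg fun p _ => abs_nonneg _
  have hTk0 : 0 ≤ Tk := by
    rw [hTk_def]; exact Finset.sum_nonneg fun j _ => svDesc_nonneg Ls j
  have ho0 : 0 ≤ o := by rw [ho_def]; exact opNorm_nonneg hn0 W
  have hoδ : o ≤ δ/2 := by linarith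
  have hw0 : 0 ≤ w := by
    rw [hw_def]
    exact le_trans (abs_nonneg _) (entry_le_supNorm W ⟨0,hn0⟩ ⟨0,hn0⟩)
  have hWe : ∀ i j, |W i j| ≤ w := fun i j => by rw [hw_def]; exact entry_le_supNorm W i j
  -- master inequality
  have master : (τ/2) * frob Δ ^2 ≤ tinner W Δ + δ * (Ls.trace - Lh.trace)
      + γ * (l1 Ss - l1 Sh) := by
    have h1 := hmin αs Ls Ss hαs hSs hLs hJs hsupLs
    rw [nuclear_psd_eq_trace hLh, nuclear_psd_eq_trace hLs] at h1
    have hWt : tinner W Δ = (1/(n:ℝ)) * tinner (X - logis Θs) Δ := by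
      rw [hW]; exact tinner_smul_left _ _ _
    rw [hWt]
    linarith [hsc, h1]
  clear_value Θh Θs W a DL DS Δ
  -- entry bounds
  have hLse : ∀ i j, |Ls i j| ≤ κ/n := fun i j => (entry_le_supNorm Ls i j).trans hsupLs
  have hLhe : ∀ i j, |Lh i j| ≤ κ/n := fun i j => (entry_le_supNorm Lh i j).trans hsupLh
  have hAentry : ∀ i j, |(a • (onesMat : Matrix (Fin n) (Fin n) ℝ) + DL) i j| ≤ q := by
    intro i j
    have h1 : (a • (onesMat : Matrix (Fin n) (Fin n) ℝ) + DL) i j = a + DL i j := by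
      simp [onesMat, hDL]
    rw [h1]
    have h2 : |a| ≤ 2*(C*κ) := by
      rw [ha]
      calc |αh - αs| ≤ |αh| + |αs| := abs_sub _ _
        _ ≤ 2*(C*κ) := by linarith
    have h3 : |DL i j| ≤ 2*(κ/n) := by
      rw [hDL]
      calc |(Lh - Ls) i j| = |Lh i j - Ls i j| := by simp [Matrix.sub_apply]
        _ ≤ |Lh i j| + |Ls i j| := abs_sub _ _
        _ ≤ 2*(κ/n) := by linarith [hLhe i j, hLse i j]
    calc |a + DL i j| ≤ |a| + |DL i j| := abs_add_le _ _
      _ ≤ q := by rw [hq_def]; linarith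
  have hl1DS : ∑ i, ∑ j, |DS i j| = m1 + m2 := by
    rw [hm1_def, hm2_def, ← Fintype.sum_prod_type' (f := fun i j => |DS i j|),
      ← Finset.sum_sdiff (Finset.subset_univ M)]
    ring
  -- cross term
  have hcross : |tinner (a • (onesMat : Matrix (Fin n) (Fin n) ℝ) + DL) DS| ≤ q * (m1 + m2) := by
    rw [tinner_eq_sum]
    calc |∑ i, ∑ j, (a • (onesMat : Matrix (Fin n) (Fin n) ℝ) + DL) i j * DS i j|
        ≤ ∑ i, ∑ j, |(a • (onesMat : Matrix (Fin n) (Fin n) ℝ) + DL) i j * DS i j| := by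
          refine (Finset.abs_sum_le_sum_abs _ _).trans ?_
          refine Finset.sum_le_sum fun i _ => Finset.abs_sum_le_sum_abs _ _
      _ ≤ ∑ i, ∑ j, q * |DS i j| := by
          refine Finset.sum_le_sum fun i _ => Finset.sum_le_sum fun j _ => ?_
          rw [abs_mul]
          exact mul_le_mul_of_nonneg_right (hAentry i j) (abs_nonneg _)
      _ = q * (m1 + m2) := by
          simp_rw [← Finset.mul_sum]
          rw [hl1DS]
  -- orthogonality
  have hones_DL : tinner (onesMat : Matrix (Fin n) (Fin n) ℝ) DL = 0 := by
    rw [tinner_ones, hDL]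
    have h1 := sum_eq_zero_of_J hn0 Lh hJh
    have h2 := sum_eq_zero_of_J hn0 Ls hJs
    simp only [Matrix.sub_apply, Finset.sum_sub_distrib]
    linarith
  have hfrobΔ : frob Δ^2 = (|a| * (n:ℝ))^2 + y^2
      + 2*tinner (a • (onesMat : Matrix (Fin n) (Fin n) ℝ) + DL) DS + z^2 := by
    rw [hΔeq, frob_add_sq, frob_add_sq, tinner_smul_left, hones_DL, frob_smul_ones_sq,
      ← hy, ← hz]
    ring

  -- spectral objects for Ls
  obtain ⟨V, hV1, hV2, hLs_dec⟩ := psd_decomp hLs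
  set sg : Fin n → ℝ :=
    fun j => Real.sqrt ((Matrix.isHermitian_transpose_mul_self Ls).eigenvalues j) with hsg
  set P := UDU V (dfun Ls k) with hPdef
  set Q := UDU V (fun j => 1 - dfun Ls k j) with hQdef
  have hPQ : P + Q = 1 := by
    rw [hPdef, hQdef, UDU_add]
    rw [show (fun j => dfun Ls k j + (1 - dfun Ls k j)) = fun _ : Fin n => (1:ℝ) by
      funext j; ring]
    exact UDU_one V hV2
  have hPsym : Pᵀ = P := UDU_transpose V _
  have hQsym : Qᵀ = Q := UDU_transpose V _
  have hPP : Pᵀ * P = P := by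
    have hdd : (fun j => dfun Ls k j * dfun Ls k j) = dfun Ls k := by
      funext j; exact dfun_mul_self Ls k j
    rw [hPsym, hPdef, UDU_mul V hV1, hdd]
  have hQQ : Qᵀ * Q = Q := by
    have hdd : (fun j => (1 - dfun Ls k j) * (1 - dfun Ls k j))
        = fun j => 1 - dfun Ls k j := by
      funext j; exact one_sub_dfun_mul_self Ls k j
    rw [hQsym, hQdef, UDU_mul V hV1, hdd]
  have hPpsd : P.PosSemidef := UDU_psd V _ (dfun_nonneg Ls k)
  have hQpsd : Q.PosSemidef := UDU_psd V _ (one_sub_dfun_nonneg Ls k)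
  have hfrobP : frob P = rk := by
    have h1 : frob P ^2 = (k:ℝ) := by
      rw [← tinner_self, tinner, hPP, hPdef, trace_UDU V hV1, sum_dfun Ls k hkn]
    rw [← Real.sqrt_sq (frob_nonneg P), h1, hrk_def]
  have htrLs : Ls.trace = ∑ j, sg j := by
    conv_lhs => rw [hLs_dec]
    exact trace_UDU V hV1 sg
  have hPLs : tinner P Ls = ∑ j, dfun Ls k j * sg j := by
    rw [tinner, hPsym]
    conv_lhs => rw [hLs_dec, hPdef]
    rw [UDU_mul V hV1, trace_UDU V hV1]
  have hTkeq : Ls.trace - tinner P Ls = Tk := by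
    rw [htrLs, hPLs, hTk_def, ← sum_one_sub_dfun_mul Ls k, ← Finset.sum_sub_distrib]
    simp only [hsg]
    congr 1
    funext j
    ring
  have hPLh0 : 0 ≤ tinner P Lh := tinner_psd_psd_nonneg P Lh hPpsd hLh
  have hQLh0 : 0 ≤ tinner Q Lh := tinner_psd_psd_nonneg Q Lh hQpsd hLh
  have hPQLh : tinner P Lh + tinner Q Lh = Lh.trace := by
    rw [← tinner_add_left, hPQ, tinner_one_left]
  have hPLh_le : tinner P Lh ≤ Lh.trace := by linarith
  have hsplit : DL = P * DL + Q * DL * P + Q * DL * Q := by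
    have h1 : Q * DL * P + Q * DL * Q = Q * DL * (P + Q) := by rw [Matrix.mul_add]
    rw [add_assoc, h1, hPQ, Matrix.mul_one, ← Matrix.add_mul, hPQ, Matrix.one_mul]
  have ht1 : tinner W (P * DL) ≤ o * rk * y := by
    rw [tinner_mul_left, hPsym]
    have h1 : frob (P * W) ≤ o * rk := by
      have h2 : frob (P * W) = frob (Wᵀ * P) := by
        rw [← frob_transpose (P*W), Matrix.transpose_mul, hPsym]
      rw [h2, ← hfrobP, ho_def]
      exact frob_transpose_mul_le hn0 W P
    calc tinner (P*W) DL ≤ |tinner (P*W) DL| := le_abs_self _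
      _ ≤ frob (P*W) * frob DL := abs_tinner_le _ _
      _ ≤ o*rk * y := by
          rw [← hy]
          exact mul_le_mul_of_nonneg_right h1 hy0
  have ht2 : tinner W (Q * DL * P) ≤ o * rk * y := by
    rw [tinner_conj, hQsym, hPsym]
    have h1 : frob (Q * (W * P)) ≤ o * rk := by
      refine (frob_proj_mul_le Q (W*P) hQQ).trans ?_
      rw [← hfrobP, ho_def]
      exact frob_mul_le hn0 W P
    calc tinner (Q*W*P) DL = tinner (Q*(W*P)) DL := by rw [Matrix.mul_assoc]
      _ ≤ |tinner (Q*(W*P)) DL| := le_abs_self _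
      _ ≤ frob (Q*(W*P)) * frob DL := abs_tinner_le _ _
      _ ≤ o*rk * y := by
          rw [← hy]
          exact mul_le_mul_of_nonneg_right h1 hy0
  have hQLhQpsd : (Q*Lh*Q).PosSemidef := by
    have := hLh.mul_mul_conjTranspose_same Q
    rwa [conjT_eq_transpose, hQsym] at this
  have hQLsQpsd : (Q*Ls*Q).PosSemidef := by
    have := hLs.mul_mul_conjTranspose_same Q
    rwa [conjT_eq_transpose, hQsym] at this
  have hQ2 : Q * Q = Q := by nth_rewrite 1 [← hQsym]; exact hQQ
  have hQ1P : Q = 1 - P := by rw [← hPQ]; abel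
  have hQmul : ∀ Lx : Matrix (Fin n) (Fin n) ℝ, (Q*Lx*Q).trace = Lx.trace - tinner P Lx := by
    intro Lx
    have h1 : (Q*Lx*Q).trace = (Q*Lx).trace := by
      rw [Matrix.trace_mul_comm, ← Matrix.mul_assoc, hQ2]
    have h2 : tinner P Lx = (P*Lx).trace := by rw [tinner, hPsym]
    rw [h1, hQ1P, Matrix.sub_mul, Matrix.one_mul, Matrix.trace_sub, h2]
  have ht3 : tinner W (Q*DL*Q) ≤ o*((Lh.trace - tinner P Lh) + Tk) := by
    have hsplitQ : Q*DL*Q = Q*Lh*Q - Q*Ls*Q := by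
      rw [hDL, Matrix.mul_sub, Matrix.sub_mul]
    rw [hsplitQ, tinner_sub_right]
    have h1 := abs_tinner_psd_le hn0 W _ hQLhQpsd
    have h2 := abs_tinner_psd_le hn0 W _ hQLsQpsd
    rw [hQmul Lh, ← ho_def] at h1
    rw [hQmul Ls, hTkeq, ← ho_def] at h2
    have h1' := (abs_le.mp h1).2
    have h2' := (abs_le.mp h2).1
    have := mul_nonneg ho0 hTk0
    linarith [mul_nonneg ho0 (by linarith : (0:ℝ) ≤ Lh.trace - tinner P Lh)]
  have hPdiff : tinner P Ls - tinner P Lh ≤ rk * y := by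
    have h1 : tinner P Ls - tinner P Lh = -(tinner P DL) := by
      rw [hDL, tinner_sub_right]; ring
    rw [h1]
    calc -(tinner P DL) ≤ |tinner P DL| := neg_le_abs _
      _ ≤ frob P * frob DL := abs_tinner_le _ _
      _ = rk * y := by rw [hfrobP, ← hy]
  have hLW : tinner W DL + δ*(Ls.trace - Lh.trace) ≤ 2*δ*rk*y + (3/2)*δ*Tk := by
    have hs' : tinner W DL = tinner W (P*DL) + tinner W (Q*DL*P) + tinner W (Q*DL*Q) := by
      conv_lhs => rw [hsplit]
      rw [tinner_add_right, tinner_add_right]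
    have hb0 : 0 ≤ Lh.trace - tinner P Lh := by linarith
    have e1 : δ*Ls.trace = δ*(tinner P Ls) + δ*Tk := by
      rw [← hTkeq]; ring
    have p1 : o*rk*y ≤ (δ/2)*(rk*y) := by
      have := mul_le_mul_of_nonneg_right hoδ (mul_nonneg hrk0 hy0)
      linarith
    have p2 : o*((Lh.trace - tinner P Lh) + Tk) ≤ (δ/2)*((Lh.trace - tinner P Lh) + Tk) := by
      have := mul_le_mul_of_nonneg_right hoδ (by linarith : (0:ℝ) ≤ (Lh.trace - tinner P Lh) + Tk)
      linarith
    have p3 : δ*(tinner P Ls - tinner P Lh) ≤ δ*(rk*y) :=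
      mul_le_mul_of_nonneg_left hPdiff (le_of_lt hδ0)
    have p4 : 0 ≤ δ*(Lh.trace - tinner P Lh) := mul_nonneg hδ0.le hb0
    linarith [ht1, ht2, ht3, p1, p2, p3, p4, hs', e1]
  -- S part
  have hSW : tinner W DS ≤ w * (m1 + m2) := by
    rw [tinner_eq_sum]
    calc ∑ i, ∑ j, W i j * DS i j ≤ ∑ i, ∑ j, w * |DS i j| := by
          refine Finset.sum_le_sum fun i _ => Finset.sum_le_sum fun j _ => ?_
          calc W i j * DS i j ≤ |W i j * DS i j| := le_abs_self _
            _ = |W i j| * |DS i j| := abs_mul _ _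
            _ ≤ w * |DS i j| := mul_le_mul_of_nonneg_right (hWe i j) (abs_nonneg _)
      _ = w * (m1 + m2) := by
          simp_rw [← Finset.mul_sum]
          rw [hl1DS]
  have hl1split : l1 Ss - l1 Sh ≤ m1 - m2 + 2*R := by
    rw [l1_eq_prod_sum Ss, l1_eq_prod_sum Sh]
    rw [← Finset.sum_sdiff (Finset.subset_univ M) (f := fun p => |Ss p.1 p.2|),
        ← Finset.sum_sdiff (Finset.subset_univ M) (f := fun p => |Sh p.1 p.2|)]
    have hA : ∑ p ∈ M, |Ss p.1 p.2| - ∑ p ∈ M, |Sh p.1 p.2| ≤ m1 := by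
      rw [← Finset.sum_sub_distrib, hm1_def]
      refine Finset.sum_le_sum fun p _ => ?_
      calc |Ss p.1 p.2| - |Sh p.1 p.2| ≤ |Ss p.1 p.2 - Sh p.1 p.2| := abs_sub_abs_le_abs_sub _ _
        _ = |DS p.1 p.2| := by rw [hDS, Matrix.sub_apply, abs_sub_comm]
    have hB : ∑ p ∈ Finset.univ \ M, |Ss p.1 p.2| - ∑ p ∈ Finset.univ \ M, |Sh p.1 p.2|
        ≤ 2*R - m2 := by
      rw [← Finset.sum_sub_distrib, hR_def, hm2_def]
      have : 2*(∑ p ∈ Finset.univ \ M, |Ss p.1 p.2|) - ∑ p ∈ Finset.univ \ M, |DS p.1 p.2|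
          = ∑ p ∈ Finset.univ \ M, (2*|Ss p.1 p.2| - |DS p.1 p.2|) := by
        rw [Finset.sum_sub_distrib, Finset.mul_sum]
      rw [this]
      refine Finset.sum_le_sum fun p _ => ?_
      have h1 : |DS p.1 p.2| ≤ |Sh p.1 p.2| + |Ss p.1 p.2| := by
        rw [hDS, Matrix.sub_apply]
        exact abs_sub _ _
      linarith
    linarith
  -- assembly
  have haW : a * tinner W onesMat ≤ (δ/2) * (|a| * n) := by
    have h1 : |tinner W onesMat| ≤ o * n := by
      rw [ho_def]
      have h2 := abs_tinner_psd_le hn0 W onesMat onesMat_posSemidef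
      rwa [onesMat_trace] at h2
    calc a * tinner W onesMat ≤ |a * tinner W onesMat| := le_abs_self _
      _ = |a| * |tinner W onesMat| := abs_mul _ _
      _ ≤ |a| * (o * n) := mul_le_mul_of_nonneg_left h1 (abs_nonneg _)
      _ ≤ |a| * ((δ/2) * n) := by
          refine mul_le_mul_of_nonneg_left ?_ (abs_nonneg _)
          exact mul_le_mul_of_nonneg_right hoδ hnR.le
      _ = (δ/2) * (|a| * n) := by ring
  have hWΔ : tinner W Δ = a * tinner W onesMat + tinner W DL + tinner W DS := by
    rw [hΔeq, tinner_add_right, tinner_add_right, tinner_smul_right]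
  set u := |a| * (n:ℝ) with hu
  clear_value u
  have hu0 : 0 ≤ u := by rw [hu]; exact mul_nonneg (abs_nonneg _) hnR.le
  have hq2 : 2*τ*q ≤ γ - 2*w := by
    have h1 : 2*τ*q = 4*κ*τ*(C*(n:ℝ)+1)/(n:ℝ) := by
      rw [hq_def]
      have hne : (n:ℝ) ≠ 0 := ne_of_gt hnR
      field_simp
      ring
    linarith
  have hcross' : -(q*(m1+m2)) ≤ tinner (a • (onesMat : Matrix (Fin n) (Fin n) ℝ) + DL) DS :=
    (abs_le.mp hcross).1
  have hm1b : m1 ≤ rs * z := by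
    rw [hm1_def, hrs_def, hz, hDS]
    exact sum_abs_le_sqrt_card_mul_frob (Sh - Ss) M s hM
  have main2 : τ*(u^2+y^2+z^2) ≤ δ*u + 4*δ*rk*y + 3*δ*Tk + 3*γ*rs*z + 4*γ*R := by
    have s1 : τ*(u^2+y^2+z^2) ≤ τ*frob Δ^2 + 2*τ*(q*(m1+m2)) := by
      have h1 := mul_le_mul_of_nonneg_left hcross' (by linarith : (0:ℝ) ≤ 2*τ)
      have h2 : τ*frob Δ^2 = τ*u^2 + τ*y^2
          + 2*(τ*tinner (a • (onesMat : Matrix (Fin n) (Fin n) ℝ) + DL) DS) + τ*z^2 := by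
        rw [hfrobΔ]; ring
      linarith [h1, h2]
    have s2 : τ*frob Δ^2 ≤ 2*(tinner W Δ) + 2*(δ*(Ls.trace - Lh.trace))
        + 2*(γ*(l1 Ss - l1 Sh)) := by linarith [master]
    have s3 : γ*(l1 Ss - l1 Sh) ≤ γ*m1 - γ*m2 + 2*(γ*R) := by
      have h1 := mul_le_mul_of_nonneg_left hl1split hγ0.le
      linarith [h1]
    have s4 : 2*(w*(m1+m2)) + 2*τ*(q*(m1+m2)) ≤ γ*(m1+m2) := by
      have h1 : (2*w + 2*τ*q) * (m1+m2) ≤ γ*(m1+m2) :=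
        mul_le_mul_of_nonneg_right (by linarith) (by linarith)
      linarith [h1]
    have s5 : 3*(γ*m1) ≤ 3*γ*rs*z := by
      have h1 := mul_le_mul_of_nonneg_left hm1b (by linarith : (0:ℝ) ≤ 3*γ)
      linarith [h1]
    have hγm2 : 0 ≤ γ*m2 := mul_nonneg hγ0.le hm20
    have hLW2 : 2*(tinner W DL) + 2*(δ*(Ls.trace - Lh.trace)) ≤ 4*δ*rk*y + 3*δ*Tk := by
      linarith [hLW]
    have haW2 : 2*(a * tinner W onesMat) ≤ δ*u := by linarith [haW]
    have hSW2 : 2*(tinner W DS) ≤ 2*(w*(m1+m2)) := by linarith [hSW]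
    linarith [s1, s2, s3, s4, s5, hγm2, hLW2, haW2, hSW2, hWΔ]
  have am1 : τ*(δ*u) ≤ τ^2*u^2/4 + δ^2 := amgm τ u δ
  have am2 : τ*(4*δ*rk*y) ≤ τ^2*y^2/4 + 16*((k:ℝ))*δ^2 := by
    have h1 := amgm τ y (4*δ*rk)
    have h2 : (4*δ*rk)^2 = 16*(k:ℝ)*δ^2 := by
      rw [show (4*δ*rk)^2 = 16*δ^2*rk^2 by ring, hrk2]; ring
    linarith [h1, h2.le, h2.ge]
  have am3 : τ*(3*γ*rs*z) ≤ τ^2*z^2/4 + 9*((s:ℝ))*γ^2 := by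
    have h1 := amgm τ z (3*γ*rs)
    have h2 : (3*γ*rs)^2 = 9*(s:ℝ)*γ^2 := by
      rw [show (3*γ*rs)^2 = 9*γ^2*rs^2 by ring, hrs2]; ring
    linarith [h1, h2.le, h2.ge]
  have main3 : τ^2*(u^2+y^2+z^2) ≤ 2*δ^2 + 22*(k:ℝ)*δ^2 + 22*(τ*δ*Tk)
      + 12*(s:ℝ)*γ^2 + 12*(τ*γ*R) := by
    have h1 := mul_le_mul_of_nonneg_left main2 hτ.le
    have hTkτδ : 0 ≤ τ*δ*Tk := mul_nonneg (mul_nonneg hτ.le hδ0.le) hTk0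
    have hRτγ : 0 ≤ τ*γ*R := mul_nonneg (mul_nonneg hτ.le hγ0.le) hR0
    have hkδ : 0 ≤ (k:ℝ)*δ^2 := mul_nonneg (by positivity) (by positivity)
    have hsγ : 0 ≤ (s:ℝ)*γ^2 := mul_nonneg (by positivity) (by positivity)
    linarith [h1, am1, am2, am3, hTkτδ, hRτγ, hkδ, hsγ, sq_nonneg δ]
  have hτ2 : (0:ℝ) < τ^2 := by positivity
  have final : u^2 + y^2 + z^2 ≤ (2*δ^2 + 22*(k:ℝ)*δ^2 + 22*(τ*δ*Tk)
      + 12*(s:ℝ)*γ^2 + 12*(τ*γ*R))/τ^2 := by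
    rw [le_div_iff₀ hτ2]
    linarith [main3]
  calc frob (a • (onesMat : Matrix (Fin n) (Fin n) ℝ))^2 + y^2 + z^2
      = u^2 + y^2 + z^2 := by rw [frob_smul_ones_sq, ← hu]
    _ ≤ (2*δ^2 + 22*(k:ℝ)*δ^2 + 22*(τ*δ*Tk) + 12*(s:ℝ)*γ^2 + 12*(τ*γ*R))/τ^2 := final
    _ = 2 * δ ^ 2 / τ ^ 2 + 22 * (δ ^ 2 / τ ^ 2) * ((k:ℝ) + τ / δ * Tk)
        + 12 * (γ ^ 2 / τ ^ 2) * ((s:ℝ) + τ / γ * R) := by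
      field_simp
      ring

end CitNet
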